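/- Let ν > 0 and let W, n be Schwartz functions on ℝᵈ with -νΔW + W = n and n ≥ 0. Then ∫ |∇W|² dx ≤ ∫ n · (-ΔW) dx, and consequently, if additionally -∫ n ΔW dx ≤ A for some A ≥ 0, then ∫ |n - W|² dx ≤ ν A and ∫ |∇W|² dx ≤ A. -/

import Mathlib

open MeasureTheory

noncomputable def lap {d : ℕ} (W : EuclideanSpace ℝ (Fin d) → ℝ)
    (x : EuclideanSpace ℝ (Fin d)) : ℝ :=
  ∑ i : Fin d,
    fderiv ℝ (fun y => fderiv ℝ W y (EuclideanSpace.single i (1 : ℝ))) x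
      (EuclideanSpace.single i (1 : ℝ))

section Aux
open MeasureTheory SchwartzMap


variable {E : Type*} [NormedAddCommGroup E] [NormedSpace ℝ E]

lemma schwartz_tempGrowth (f : 𝓢(E, ℝ)) : Function.HasTemperateGrowth ⇑f := by
  refine ⟨f.smooth', fun n => ⟨0, SchwartzMap.seminorm ℝ 0 n f, fun x => ?_⟩⟩
  simpa using f.norm_iteratedFDeriv_le_seminorm ℝ n x

noncomputable def smul2 (g f : 𝓢(E, ℝ)) : 𝓢(E, ℝ) :=
  SchwartzMap.bilinLeftCLM (ContinuousLinearMap.mul ℝ ℝ) (schwartz_tempGrowth g) f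

lemma smul2_apply (g f : 𝓢(E, ℝ)) (x : E) : smul2 g f x = f x * g x := rfl

variable {d : ℕ}

local notation "Eu" d => EuclideanSpace ℝ (Fin d)

lemma schwartz_decay_bound (h : 𝓢(EuclideanSpace ℝ (Fin d), ℝ)) :
    ∃ C : ℝ, 0 ≤ C ∧ ∀ y, ‖h y‖ ≤ C * ((1 + ‖y‖) ^ (d + 1 : ℕ))⁻¹ := by
  refine ⟨2 ^ (d+1) * (Finset.Iic ((d+1 : ℕ), 0)).sup
      (fun m => SchwartzMap.seminorm ℝ m.1 m.2) h, by positivity, fun y => ?_⟩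
  have hb := one_add_le_sup_seminorm_apply (𝕜 := ℝ) (m := (d+1, 0)) (k := d+1) (n := 0)
    le_rfl le_rfl h y
  rw [norm_iteratedFDeriv_zero] at hb
  have hy : (0:ℝ) < 1 + ‖y‖ := by positivity
  rw [mul_comm _ (((1 + ‖y‖ : ℝ) ^ (d+1:ℕ))⁻¹), ← div_eq_inv_mul, le_div_iff₀ (by positivity)]
  calc ‖h y‖ * (1 + ‖y‖) ^ (d+1:ℕ) = (1 + ‖y‖) ^ (d+1:ℕ) * ‖h y‖ := by ring
    _ ≤ _ := hb

lemma integral_pderiv_eq_zero (g : 𝓢(EuclideanSpace ℝ (Fin d), ℝ))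
    (v : EuclideanSpace ℝ (Fin d)) :
    ∫ x, fderiv ℝ (⇑g) x v = 0 := by
  classical
  set h : 𝓢(EuclideanSpace ℝ (Fin d), ℝ) := LineDeriv.lineDerivOp v g with hh
  obtain ⟨C, hC0, hC⟩ := schwartz_decay_bound h
  set F : ℝ → (EuclideanSpace ℝ (Fin d)) → ℝ := fun t x => g (x + t • v) with hF
  set F' : ℝ → (EuclideanSpace ℝ (Fin d)) → ℝ := fun t x => h (x + t • v) with hF'
  have hintb : Integrable (fun x : EuclideanSpace ℝ (Fin d) =>
      (1 + ‖v‖) ^ (d+1) * C * ((1 + ‖x‖) ^ (d + 1 : ℕ))⁻¹) := by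
    have h1 : Integrable (fun x : EuclideanSpace ℝ (Fin d) =>
        (1 + ‖x‖) ^ (-(d + 1 : ℝ))) := by
      apply integrable_one_add_norm
      rw [finrank_euclideanSpace_fin]
      norm_num
    have h2 : (fun x : EuclideanSpace ℝ (Fin d) => (1 + ‖x‖) ^ (-(d + 1 : ℝ)))
        = fun x : EuclideanSpace ℝ (Fin d) => ((1 + ‖x‖) ^ (d + 1 : ℕ))⁻¹ := by
      funext x
      have hx : (0:ℝ) < 1 + ‖x‖ := by positivity
      rw [Real.rpow_neg hx.le, ← Real.rpow_natCast (1 + ‖x‖) (d+1)]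
      norm_num
    rw [h2] at h1
    exact h1.const_mul _
  have key : HasDerivAt (fun t => ∫ x, F t x) (∫ x, F' 0 x) 0 := by
    refine (hasDerivAt_integral_of_dominated_loc_of_deriv_le (Metric.ball_mem_nhds 0 one_pos)
      ?_ ?_ ?_ ?_ hintb ?_).2
    · filter_upwards with t
      exact (g.continuous.comp (by continuity)).aestronglyMeasurable
    · have : F 0 = fun x => g x := by funext x; simp [hF]
      rw [this]; exact g.integrable
    · exact (h.continuous.comp (by continuity)).aestronglyMeasurable
    · filter_upwards with x
      intro t ht
      simp only [Metric.mem_ball, dist_zero_right, Real.norm_eq_abs] at ht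
      have h1 : (1 + ‖x‖ : ℝ) ≤ (1 + ‖v‖) * (1 + ‖x + t • v‖) := by
        have hxx : ‖x‖ ≤ ‖x + t • v‖ + ‖v‖ := by
          have hxe : x = (x + t • v) - t • v := by abel
          calc ‖x‖ = ‖(x + t • v) - t • v‖ := by rw [← hxe]
            _ ≤ ‖x + t • v‖ + ‖t • v‖ := norm_sub_le _ _
            _ ≤ ‖x + t • v‖ + ‖v‖ := by
                gcongr
                rw [norm_smul, Real.norm_eq_abs]
                exact mul_le_of_le_one_left (norm_nonneg v) ht.le
        nlinarith [norm_nonneg (x + t • v), norm_nonneg v, norm_nonneg x]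
      have h2 := hC (x + t • v)
      have hx0 : (0:ℝ) < 1 + ‖x‖ := by positivity
      have hxt0 : (0:ℝ) < 1 + ‖x + t • v‖ := by positivity
      have h3 : ((1 + ‖x‖ : ℝ)) ^ (d+1:ℕ) ≤ (1 + ‖v‖)^(d+1:ℕ) * (1 + ‖x + t • v‖)^(d+1:ℕ) := by
        rw [← mul_pow]
        exact pow_le_pow_left₀ hx0.le h1 _
      have h4 : ((1 + ‖x + t • v‖ : ℝ) ^ (d+1:ℕ))⁻¹ ≤
          (1 + ‖v‖)^(d+1:ℕ) * ((1 + ‖x‖)^(d+1:ℕ))⁻¹ := by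
        rw [← div_eq_mul_inv, le_div_iff₀ (by positivity), inv_mul_eq_div,
          div_le_iff₀ (by positivity)]
        linarith [h3]
      calc ‖F' t x‖ = ‖h (x + t • v)‖ := rfl
        _ ≤ C * ((1 + ‖x + t • v‖) ^ (d+1:ℕ))⁻¹ := h2
        _ ≤ C * ((1 + ‖v‖)^(d+1:ℕ) * ((1 + ‖x‖)^(d+1:ℕ))⁻¹) := by
            exact mul_le_mul_of_nonneg_left h4 hC0
        _ = (1 + ‖v‖) ^ (d+1) * C * ((1 + ‖x‖) ^ (d + 1 : ℕ))⁻¹ := by ring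
    · filter_upwards with x
      intro t ht
      have hline : HasDerivAt (fun s : ℝ => x + s • v) v t := by
        simpa using ((hasDerivAt_id t).smul_const v).const_add x
      have := (g.differentiable.differentiableAt.hasFDerivAt).comp_hasDerivAt t hline
      simpa [hF, hF', hh, SchwartzMap.lineDerivOp_apply_eq_fderiv, Function.comp_def] using this
  have hconst : (fun t : ℝ => ∫ x, F t x) = fun _ => ∫ x, g x := by
    funext t
    simpa [hF] using integral_add_right_eq_self (fun x => g x) (t • v)
  rw [hconst] at key
  have hz := key.unique (hasDerivAt_const 0 _)
  have h0 : ∫ x, F' 0 x = ∫ x, fderiv ℝ (⇑g) x v := by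
    congr 1; funext x; simp [hF', hh, SchwartzMap.lineDerivOp_apply_eq_fderiv]
  rw [← h0]; exact hz

lemma integral_parts (f g : 𝓢(EuclideanSpace ℝ (Fin d), ℝ)) (v : EuclideanSpace ℝ (Fin d)) :
    ∫ x, f x * fderiv ℝ (⇑g) x v = -∫ x, fderiv ℝ (⇑f) x v * g x := by
  have hfg := integral_pderiv_eq_zero (smul2 g f) v
  have hder : ∀ x, fderiv ℝ (⇑(smul2 g f)) x v
      = fderiv ℝ (⇑f) x v * g x + f x * fderiv ℝ (⇑g) x v := by
    intro x
    have hco : ⇑(smul2 g f) = fun y => f y * g y := by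
      funext y; exact smul2_apply g f y
    rw [hco, fderiv_fun_mul f.differentiable.differentiableAt g.differentiable.differentiableAt]
    simp only [ContinuousLinearMap.add_apply, ContinuousLinearMap.coe_smul', Pi.smul_apply, smul_eq_mul]; ring
  rw [funext hder] at hfg
  have hi1 : Integrable (fun x => fderiv ℝ (⇑f) x v * g x) := by
    have : (fun x => fderiv ℝ (⇑f) x v * g x)
        = fun x => (smul2 g (LineDeriv.lineDerivOp v f)) x := by
      funext x; rw [smul2_apply]; rfl
    rw [this]; exact (smul2 g (LineDeriv.lineDerivOp v f)).integrable
  have hi2 : Integrable (fun x => f x * fderiv ℝ (⇑g) x v) := by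
    have : (fun x => f x * fderiv ℝ (⇑g) x v)
        = fun x => (smul2 (LineDeriv.lineDerivOp v g) f) x := by
      funext x; rw [smul2_apply]; rfl
    rw [this]; exact (smul2 (LineDeriv.lineDerivOp v g) f).integrable
  rw [integral_add hi1 hi2] at hfg
  linarith

open SchwartzMap in
lemma grad_norm_sq (W : 𝓢(EuclideanSpace ℝ (Fin d), ℝ)) (x : EuclideanSpace ℝ (Fin d)) :
    ‖gradient (⇑W) x‖ ^ 2
      = ∑ i : Fin d, (fderiv ℝ (⇑W) x (EuclideanSpace.single i (1:ℝ))) ^ 2 := by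
  set G : EuclideanSpace ℝ (Fin d) := gradient (⇑W) x with hG
  have hGi : ∀ i, G i = fderiv ℝ (⇑W) x (EuclideanSpace.single i (1:ℝ)) := by
    intro i
    have h1 : (inner ℝ G (EuclideanSpace.single i (1:ℝ)) : ℝ)
        = fderiv ℝ (⇑W) x (EuclideanSpace.single i (1:ℝ)) := by
      rw [hG]
      exact InnerProductSpace.toDual_symm_apply
    rw [EuclideanSpace.inner_single_right] at h1
    simpa using h1
  have hnorm : ‖G‖ ^ 2 = ∑ i, (G i) ^ 2 := by
    rw [EuclideanSpace.norm_eq, Real.sq_sqrt (by positivity)]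
    simp [Real.norm_eq_abs, sq_abs]
  rw [hnorm]
  exact Finset.sum_congr rfl fun i _ => by rw [hGi i]


end Aux

open SchwartzMap in
theorem brinkman_combined_estimates {d : ℕ} (ν : ℝ) (hν : 0 < ν)
    (W n : SchwartzMap (EuclideanSpace ℝ (Fin d)) ℝ)
    (hBrinkman : ∀ x, -ν * lap (⇑W) x + W x = n x)
    (hn0 : ∀ x, 0 ≤ n x) :
    (∫ x, ‖gradient (⇑W) x‖ ^ 2) ≤ ∫ x, n x * (-(lap (⇑W) x)) ∧
    ∀ A : ℝ, 0 ≤ A → (-∫ x, n x * lap (⇑W) x) ≤ A →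
      (∫ x, (n x - W x) ^ 2 ≤ ν * A ∧ (∫ x, ‖gradient (⇑W) x‖ ^ 2) ≤ A) := by
  classical
  set e : Fin d → EuclideanSpace ℝ (Fin d) := fun i => EuclideanSpace.single i (1:ℝ) with he
  set Wi : Fin d → 𝓢(EuclideanSpace ℝ (Fin d), ℝ) := fun i => LineDeriv.lineDerivOp (e i) W with hWi
  set LS : 𝓢(EuclideanSpace ℝ (Fin d), ℝ) := ∑ i, LineDeriv.lineDerivOp (e i) (Wi i) with hLS
  have hWi_coe : ∀ i, ⇑(Wi i) = fun y => fderiv ℝ (⇑W) y (e i) := fun i =>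
    funext fun y => SchwartzMap.lineDerivOp_apply_eq_fderiv (e i) W y
  have hLS_coe : ∀ x, LS x = ∑ i, fderiv ℝ (⇑(Wi i)) x (e i) := by
    intro x
    rw [hLS]
    have : ((∑ i, LineDeriv.lineDerivOp (e i) (Wi i) : 𝓢(EuclideanSpace ℝ (Fin d), ℝ)) : _ → ℝ)
        = ∑ i, ⇑(LineDeriv.lineDerivOp (e i) (Wi i)) := by
      rw [← coe_coeHom, map_sum]
    rw [this, Finset.sum_apply]
    exact Finset.sum_congr rfl fun i _ => SchwartzMap.lineDerivOp_apply_eq_fderiv (e i) (Wi i) x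
  have hlap : ∀ x, lap (⇑W) x = LS x := by
    intro x
    rw [hLS_coe x, lap]
    exact Finset.sum_congr rfl fun i _ => by rw [hWi_coe i]
  -- integrability
  have hint_sq : ∀ i, Integrable (fun x => (Wi i x) ^ 2) := by
    intro i
    have : (fun x => (Wi i x) ^ 2) = fun x => (smul2 (Wi i) (Wi i)) x := by
      funext x; rw [smul2_apply]; ring
    rw [this]; exact (smul2 (Wi i) (Wi i)).integrable
  have hint_WL : ∀ i, Integrable (fun x => W x * fderiv ℝ (⇑(Wi i)) x (e i)) := by
    intro i
    have : (fun x => W x * fderiv ℝ (⇑(Wi i)) x (e i))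
        = fun x => (smul2 (LineDeriv.lineDerivOp (e i) (Wi i)) W) x := by
      funext x; rw [smul2_apply]; rfl
    rw [this]; exact (smul2 (LineDeriv.lineDerivOp (e i) (Wi i)) W).integrable
  have hint_WLS : Integrable (fun x => W x * LS x) := by
    have : (fun x => W x * LS x) = fun x => (smul2 LS W) x := by
      funext x; rw [smul2_apply]
    rw [this]; exact (smul2 LS W).integrable
  have hint_LL : Integrable (fun x => LS x * LS x) := by
    have : (fun x => LS x * LS x) = fun x => (smul2 LS LS) x := by
      funext x; rw [smul2_apply]
    rw [this]; exact (smul2 LS LS).integrable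
  -- a = grad integral
  set a : ℝ := ∫ x, ‖gradient (⇑W) x‖ ^ 2 with ha
  set b : ℝ := ∫ x, LS x * LS x with hb
  have ha_sum : a = ∑ i, ∫ x, (Wi i x) ^ 2 := by
    rw [ha]
    have h1 : (fun x => ‖gradient (⇑W) x‖ ^ 2) = fun x => ∑ i, (Wi i x) ^ 2 := by
      funext x
      rw [grad_norm_sq W x]
      exact Finset.sum_congr rfl fun i _ => by rw [hWi_coe i]
    rw [h1, integral_finset_sum _ fun i _ => hint_sq i]
  have hparts : ∫ x, W x * LS x = -a := by
    have h1 : (fun x => W x * LS x)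
        = fun x => ∑ i, W x * fderiv ℝ (⇑(Wi i)) x (e i) := by
      funext x; rw [hLS_coe x, Finset.mul_sum]
    rw [h1, integral_finset_sum _ fun i _ => hint_WL i]
    have h2 : ∀ i, ∫ x, W x * fderiv ℝ (⇑(Wi i)) x (e i) = -∫ x, (Wi i x) ^ 2 := by
      intro i
      rw [integral_parts W (Wi i) (e i)]
      congr 1
      have : (fun x => fderiv ℝ (⇑W) x (e i) * Wi i x) = fun x => (Wi i x) ^ 2 := by
        funext x; rw [hWi_coe i]; ring
      rw [this]
    rw [Finset.sum_congr rfl fun i _ => h2 i, ha_sum, ← Finset.sum_neg_distrib]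
  -- pointwise Brinkman
  have hnW : ∀ x, n x - W x = -(ν * LS x) := by
    intro x
    have := hBrinkman x
    rw [hlap x] at this
    linarith
  have hT : ∫ x, n x * (-(lap (⇑W) x)) = a + ν * b := by
    have h1 : (fun x => n x * (-(lap (⇑W) x)))
        = fun x => ν * (LS x * LS x) - W x * LS x := by
      funext x
      have h2 := hnW x
      rw [hlap x]
      linear_combination (-(LS x)) * h2
    rw [h1, integral_sub (hint_LL.const_mul ν) hint_WLS, integral_const_mul, hparts, ← hb]
    ring
  have ha0 : 0 ≤ a := by
    rw [ha]; exact integral_nonneg fun x => by positivity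
  have hb0 : 0 ≤ b := by
    rw [hb]; exact integral_nonneg fun x => mul_self_nonneg _
  have hνb0 : 0 ≤ ν * b := mul_nonneg hν.le hb0
  constructor
  · rw [hT]; linarith
  · intro A hA0 hA
    have hTA : a + ν * b ≤ A := by
      rw [← hT]
      have : ∫ x, n x * (-(lap (⇑W) x)) = -∫ x, n x * lap (⇑W) x := by
        rw [← integral_neg]
        congr 1; funext x; ring
      rw [this]; exact hA
    constructor
    · have h1 : (fun x => (n x - W x) ^ 2) = fun x => (ν * ν) * (LS x * LS x) := by
        funext x; rw [hnW x]; ring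
      rw [h1, integral_const_mul, ← hb]
      have hνb : ν * b ≤ A := by linarith
      have h2 : ν * (ν * b) ≤ ν * A := mul_le_mul_of_nonneg_left hνb hν.le
      have h3 : (ν * ν) * b = ν * (ν * b) := by ring
      rw [h3]; exact h2
    · linarith
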